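/- Let H be a positive semidefinite n×n block matrix with k×k blocks, and let tr₁H = Σᵢ H_{i,i} be the sum of the diagonal blocks. Then (det(tr₁H)/n)^n ≥ det H. -/

import Mathlib

open Matrix BigOperators ComplexOrder

/-- First partial trace: sum of the diagonal blocks. -/
noncomputable def ptrace1 {n k : ℕ} (H : Matrix (Fin n × Fin k) (Fin n × Fin k) ℂ) :
    Matrix (Fin k) (Fin k) ℂ :=
  Matrix.of fun l m => ∑ i : Fin n, H (i, l) (i, m)

open Kronecker
open scoped MatrixOrder

section Aux

/-- AM-GM: the product of nonnegative reals is at most the `N`-th power of their average. -/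
lemma lin_amgm {ι : Type*} [Fintype ι] (x : ι → ℝ) (hx : ∀ i, 0 ≤ x i)
    (hc : 0 < Fintype.card ι) :
    ∏ i, x i ≤ ((∑ i, x i) / Fintype.card ι) ^ Fintype.card ι := by
  set N := Fintype.card ι with hN
  have key := Real.geom_mean_le_arith_mean_weighted Finset.univ
    (fun _ => (N : ℝ)⁻¹) x (fun _ _ => by positivity)
    (by simp [Finset.card_univ, ← hN, mul_comm]; field_simp) (fun i _ => hx i)
  have hprod : ∏ i, x i ^ ((N:ℝ)⁻¹) = (∏ i, x i) ^ ((N:ℝ)⁻¹) :=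
    Real.finset_prod_rpow _ _ (fun i _ => hx i) _
  rw [hprod] at key
  have h2 : ((∏ i, x i) ^ ((N:ℝ)⁻¹)) ^ N ≤ ((∑ i, x i) / N) ^ N := by
    apply pow_le_pow_left₀ (Real.rpow_nonneg (Finset.prod_nonneg fun i _ => hx i) _)
    calc (∏ i, x i) ^ ((N:ℝ)⁻¹) ≤ ∑ i, (N:ℝ)⁻¹ * x i := key
    _ = (∑ i, x i) / N := by rw [← Finset.mul_sum]; ring
  rwa [Real.rpow_inv_natCast_pow (Finset.prod_nonneg fun i _ => hx i) hc.ne'] at h2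

lemma lin_trace_eq_sum_eig {ι : Type*} [Fintype ι] [DecidableEq ι]
    {A : Matrix ι ι ℂ} (hA : A.IsHermitian) :
    A.trace = ∑ i, (hA.eigenvalues i : ℂ) := by
  conv_lhs => rw [hA.spectral_theorem]
  rw [Unitary.conjStarAlgAut_apply, Matrix.trace_mul_cycle]
  have : (star (hA.eigenvectorUnitary : Matrix ι ι ℂ)) * (hA.eigenvectorUnitary : Matrix ι ι ℂ)
      = 1 := by
    simpa using Unitary.star_mul_self_of_mem (hA.eigenvectorUnitary).2
  rw [this, Matrix.one_mul, Matrix.trace_diagonal]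
  rfl

/-- AM-GM for PSD matrices: `det A ≤ (tr A / N) ^ N`. -/
lemma lin_psd_amgm {ι : Type*} [Fintype ι] [DecidableEq ι]
    {A : Matrix ι ι ℂ} (hA : A.PosSemidef) (hc : 0 < Fintype.card ι) :
    A.det.re ≤ (A.trace.re / Fintype.card ι) ^ Fintype.card ι := by
  have hdet : A.det = ((∏ i, hA.1.eigenvalues i : ℝ) : ℂ) := by
    rw [hA.1.det_eq_prod_eigenvalues]; push_cast; rfl
  have htr : A.trace = ((∑ i, hA.1.eigenvalues i : ℝ) : ℂ) := by
    rw [lin_trace_eq_sum_eig hA.1]; push_cast; rfl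
  rw [hdet, htr, Complex.ofReal_re, Complex.ofReal_re]
  exact lin_amgm _ hA.eigenvalues_nonneg hc

/-- The determinant of a PSD matrix is a nonnegative real. -/
lemma lin_psd_det_real {ι : Type*} [Fintype ι] [DecidableEq ι]
    {A : Matrix ι ι ℂ} (hA : A.PosSemidef) :
    A.det = (A.det.re : ℂ) ∧ 0 ≤ A.det.re := by
  have hdet : A.det = ((∏ i, hA.1.eigenvalues i : ℝ) : ℂ) := by
    rw [hA.1.det_eq_prod_eigenvalues]; push_cast; rfl
  rw [hdet, Complex.ofReal_re]
  exact ⟨rfl, Finset.prod_nonneg fun i _ => hA.eigenvalues_nonneg i⟩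

/-- Embedding of a `k`-vector into the `i`-th block of an `nk`-vector. -/
def linEmb {n k : ℕ} (i : Fin n) (v : Fin k → ℂ) : Fin n × Fin k → ℂ :=
  fun p => if p.1 = i then v p.2 else 0

lemma lin_mulVec_emb {n k : ℕ} (H : Matrix (Fin n × Fin k) (Fin n × Fin k) ℂ) (i : Fin n)
    (v : Fin k → ℂ) (p : Fin n × Fin k) :
    (H *ᵥ linEmb i v) p = ∑ m : Fin k, H p (i, m) * v m := by
  calc (H *ᵥ linEmb i v) p = ∑ q : Fin n × Fin k, H p q * linEmb i v q := rfl
  _ = ∑ j : Fin n, ∑ m : Fin k, H p (j, m) * linEmb i v (j, m) := Fintype.sum_prod_type _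
  _ = ∑ m : Fin k, ∑ j : Fin n, H p (j, m) * linEmb i v (j, m) := Finset.sum_comm
  _ = ∑ m : Fin k, H p (i, m) * v m := by
      apply Finset.sum_congr rfl; intro m _
      simp [linEmb, mul_ite, mul_zero, Finset.sum_ite_eq']

lemma lin_quad_emb {n k : ℕ} (H : Matrix (Fin n × Fin k) (Fin n × Fin k) ℂ) (i : Fin n)
    (v : Fin k → ℂ) :
    star (linEmb i v) ⬝ᵥ H *ᵥ (linEmb i v) = ∑ l : Fin k, ∑ m : Fin k,
      star (v l) * (H (i, l) (i, m) * v m) := by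
  calc star (linEmb i v) ⬝ᵥ H *ᵥ (linEmb i v)
      = ∑ p : Fin n × Fin k, star (linEmb i v p) * (H *ᵥ linEmb i v) p := rfl
  _ = ∑ j : Fin n, ∑ l : Fin k, star (linEmb i v (j, l)) * (H *ᵥ linEmb i v) (j, l) :=
      Fintype.sum_prod_type _
  _ = ∑ l : Fin k, ∑ j : Fin n, star (linEmb i v (j, l)) * (H *ᵥ linEmb i v) (j, l) :=
      Finset.sum_comm
  _ = ∑ l : Fin k, ∑ m : Fin k, star (v l) * (H (i, l) (i, m) * v m) := by
      apply Finset.sum_congr rfl; intro l _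
      rw [show (∑ j : Fin n, star (linEmb i v (j, l)) * (H *ᵥ linEmb i v) (j, l))
          = star (v l) * (H *ᵥ linEmb i v) (i, l) by
        simp [linEmb, apply_ite (star : ℂ → ℂ), ite_mul, zero_mul, Finset.sum_ite_eq']]
      rw [lin_mulVec_emb, Finset.mul_sum]

lemma lin_quad_ptrace1 {n k : ℕ} (H : Matrix (Fin n × Fin k) (Fin n × Fin k) ℂ)
    (v : Fin k → ℂ) :
    star v ⬝ᵥ (ptrace1 H) *ᵥ v = ∑ i : Fin n, star (linEmb i v) ⬝ᵥ H *ᵥ (linEmb i v) := by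
  simp only [lin_quad_emb]
  calc star v ⬝ᵥ (ptrace1 H) *ᵥ v
      = ∑ l : Fin k, star (v l) * ∑ m : Fin k, (∑ i : Fin n, H (i, l) (i, m)) * v m := rfl
  _ = ∑ l : Fin k, ∑ m : Fin k, ∑ i : Fin n, star (v l) * (H (i, l) (i, m) * v m) := by
      simp only [Finset.mul_sum, Finset.sum_mul]
  _ = ∑ l : Fin k, ∑ i : Fin n, ∑ m : Fin k, star (v l) * (H (i, l) (i, m) * v m) :=
      Finset.sum_congr rfl fun l _ => Finset.sum_comm
  _ = ∑ i : Fin n, ∑ l : Fin k, ∑ m : Fin k, star (v l) * (H (i, l) (i, m) * v m) :=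
      Finset.sum_comm

lemma lin_ptrace1_herm {n k : ℕ} {H : Matrix (Fin n × Fin k) (Fin n × Fin k) ℂ}
    (hH : H.IsHermitian) : (ptrace1 H).IsHermitian := by
  ext l m
  simp only [Matrix.conjTranspose_apply, ptrace1, Matrix.of_apply, star_sum]
  apply Finset.sum_congr rfl; intro i _
  calc star (H (i, m) (i, l)) = Hᴴ (i, l) (i, m) := rfl
  _ = H (i, l) (i, m) := by rw [hH]

lemma lin_ptrace1_psd {n k : ℕ} {H : Matrix (Fin n × Fin k) (Fin n × Fin k) ℂ}
    (hH : H.PosSemidef) : (ptrace1 H).PosSemidef := by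
  refine PosSemidef.of_dotProduct_mulVec_nonneg (lin_ptrace1_herm hH.1) fun v => ?_
  rw [lin_quad_ptrace1]
  exact Finset.sum_nonneg fun i _ => hH.dotProduct_mulVec_nonneg _

lemma lin_trace_one_kron {n k : ℕ} (B : Matrix (Fin k) (Fin k) ℂ)
    (H : Matrix (Fin n × Fin k) (Fin n × Fin k) ℂ) :
    (((1 : Matrix (Fin n) (Fin n) ℂ) ⊗ₖ B) * H).trace = (B * ptrace1 H).trace := by
  have hentry : ∀ (i : Fin n) (l : Fin k),
      (((1 : Matrix (Fin n) (Fin n) ℂ) ⊗ₖ B) * H) (i, l) (i, l)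
      = ∑ m : Fin k, B l m * H (i, m) (i, l) := by
    intro i l
    calc (((1 : Matrix (Fin n) (Fin n) ℂ) ⊗ₖ B) * H) (i, l) (i, l)
        = ∑ q : Fin n × Fin k, ((1 : Matrix (Fin n) (Fin n) ℂ) ⊗ₖ B) (i, l) q * H q (i, l) :=
          Matrix.mul_apply
      _ = ∑ j : Fin n, ∑ m : Fin k,
            ((1 : Matrix (Fin n) (Fin n) ℂ) ⊗ₖ B) (i, l) (j, m) * H (j, m) (i, l) :=
          Fintype.sum_prod_type _
      _ = ∑ m : Fin k, ∑ j : Fin n,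
            ((1 : Matrix (Fin n) (Fin n) ℂ) ⊗ₖ B) (i, l) (j, m) * H (j, m) (i, l) :=
          Finset.sum_comm
      _ = ∑ m : Fin k, B l m * H (i, m) (i, l) := by
          apply Finset.sum_congr rfl; intro m _
          simp [Matrix.kroneckerMap_apply, Matrix.one_apply, ite_mul, zero_mul,
            Finset.sum_ite_eq]
  calc (((1 : Matrix (Fin n) (Fin n) ℂ) ⊗ₖ B) * H).trace
      = ∑ i : Fin n, ∑ l : Fin k, (((1 : Matrix (Fin n) (Fin n) ℂ) ⊗ₖ B) * H) (i, l) (i, l) :=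
        Fintype.sum_prod_type _
    _ = ∑ i : Fin n, ∑ l : Fin k, ∑ m : Fin k, B l m * H (i, m) (i, l) :=
        Finset.sum_congr rfl fun i _ => Finset.sum_congr rfl fun l _ => hentry i l
    _ = ∑ l : Fin k, ∑ m : Fin k, ∑ i : Fin n, B l m * H (i, m) (i, l) := by
        rw [Finset.sum_comm]
        exact Finset.sum_congr rfl fun l _ => Finset.sum_comm
    _ = (B * ptrace1 H).trace := by
        rw [Matrix.trace]
        apply Finset.sum_congr rfl; intro l _
        rw [Matrix.diag_apply, Matrix.mul_apply]
        apply Finset.sum_congr rfl; intro m _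
        rw [ptrace1, Matrix.of_apply, Finset.mul_sum]

lemma lin_kron_herm {n k : ℕ} {S : Matrix (Fin k) (Fin k) ℂ} (hS : S.IsHermitian) :
    ((1 : Matrix (Fin n) (Fin n) ℂ) ⊗ₖ S)ᴴ = (1 : Matrix (Fin n) (Fin n) ℂ) ⊗ₖ S := by
  ext p q
  simp only [Matrix.conjTranspose_apply, Matrix.kroneckerMap_apply, Matrix.one_apply]
  rcases eq_or_ne p.1 q.1 with h | h
  · simp only [h, if_pos rfl, one_mul, star_one]
    have := congrFun (congrFun hS p.2) q.2
    simpa using this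
  · simp [h, Ne.symm h]

end Aux

/-- Lin 2016: (det(tr₁H)/n)^n ≥ det H. -/
theorem stmt1 {n k : ℕ} (hn : 0 < n) (hk : 0 < k)
    (H : Matrix (Fin n × Fin k) (Fin n × Fin k) ℂ) (hH : H.PosSemidef) :
    ((ptrace1 H).det.re / n) ^ n ≥ H.det.re := by
  set T := ptrace1 H with hT
  have hTpsd : T.PosSemidef := lin_ptrace1_psd hH
  by_cases hdet : T.det = 0
  · -- singular case : det H = 0
    obtain ⟨v, hv, hTv⟩ := (Matrix.exists_mulVec_eq_zero_iff).mpr hdet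
    have hsum : ∑ i : Fin n, star (linEmb i v) ⬝ᵥ H *ᵥ (linEmb i v) = 0 := by
      rw [← lin_quad_ptrace1, hTv, dotProduct_zero]
    set i0 : Fin n := ⟨0, hn⟩
    have h0 : star (linEmb i0 v) ⬝ᵥ H *ᵥ (linEmb i0 v) = 0 :=
      (Finset.sum_eq_zero_iff_of_nonneg (fun i _ => hH.dotProduct_mulVec_nonneg (linEmb i v))).mp hsum i0
        (Finset.mem_univ _)
    have hHv : H *ᵥ linEmb i0 v = 0 := (hH.dotProduct_mulVec_zero_iff _).mp h0
    have hemb : linEmb i0 v ≠ 0 := by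
      obtain ⟨l, hl⟩ := Function.ne_iff.mp hv
      intro hcontra
      apply hl
      have := congrFun hcontra (i0, l)
      simpa [linEmb] using this
    have hHdet : H.det = 0 := Matrix.exists_mulVec_eq_zero_iff.mp ⟨linEmb i0 v, hemb, hHv⟩
    rw [hdet, hHdet]
    simp [zero_pow hn.ne']
  · -- T is positive definite
    have hTpd : T.PosDef := by
      refine Matrix.PosDef.of_dotProduct_mulVec_pos hTpsd.1 fun x hx => lt_of_le_of_ne (hTpsd.dotProduct_mulVec_nonneg x) fun h => ?_
      exact hdet (Matrix.exists_mulVec_eq_zero_iff.mp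
        ⟨x, hx, (hTpsd.dotProduct_mulVec_zero_iff x).mp h.symm⟩)
    have hTinv : (T⁻¹).PosDef := hTpd.inv
    set S := CFC.sqrt (T⁻¹) with hSdef
    have hSpsd : S.PosSemidef := Matrix.nonneg_iff_posSemidef.mp (CFC.sqrt_nonneg _)
    have hSmul : S * S = T⁻¹ := CFC.sqrt_mul_sqrt_self _ hTinv.posSemidef.nonneg
    set M := (1 : Matrix (Fin n) (Fin n) ℂ) ⊗ₖ S with hM
    have hMh : Mᴴ = M := lin_kron_herm hSpsd.1
    set H' := M * H * Mᴴ with hH'def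
    have hH'psd : H'.PosSemidef := hH.mul_mul_conjTranspose_same M
    -- trace of H'
    have hMM : M * M = (1 : Matrix (Fin n) (Fin n) ℂ) ⊗ₖ (T⁻¹) := by
      rw [hM, ← Matrix.mul_kronecker_mul, Matrix.one_mul, hSmul]
    have htr : H'.trace = (k : ℂ) := by
      rw [hH'def, hMh, Matrix.trace_mul_comm (M * H) M, ← Matrix.mul_assoc, hMM,
        lin_trace_one_kron, Matrix.nonsing_inv_mul T (isUnit_iff_ne_zero.mpr hdet),
        Matrix.trace_one]
      simp
    -- determinant of H'
    have hdetM : M.det = S.det ^ n := by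
      rw [hM, Matrix.det_kronecker, Matrix.det_one]
      simp
    have hdetH' : H'.det = H.det * (S.det ^ n) ^ 2 := by
      rw [hH'def, Matrix.det_mul, Matrix.det_mul, hMh, hdetM]; ring
    -- real quantities
    obtain ⟨hHre, hHnn⟩ := lin_psd_det_real hH
    obtain ⟨hSre, hSnn⟩ := lin_psd_det_real hSpsd
    obtain ⟨hTre, hTnn⟩ := lin_psd_det_real hTpsd
    set t := T.det.re
    set h := H.det.re
    set s := S.det.re
    have ht : 0 < t := by
      rcases hTnn.lt_or_eq with h1 | h1
      · exact h1
      · exact absurd (by rw [hTre, ← h1]; simp) hdet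
    have hs2 : s ^ 2 = t⁻¹ := by
      have : S.det * S.det = (T.det)⁻¹ := by
        rw [← Matrix.det_mul, hSmul, Matrix.det_nonsing_inv, Ring.inverse_eq_inv']
      rw [hSre, hTre] at this
      have := this
      rw [← Complex.ofReal_mul, ← Complex.ofReal_inv] at this
      have := Complex.ofReal_injective this
      rw [sq]; exact this
    -- AM-GM applied to H'
    have hcard : Fintype.card (Fin n × Fin k) = n * k := by simp
    have hcardpos : 0 < Fintype.card (Fin n × Fin k) := by
      rw [hcard]; positivity
    have key := lin_psd_amgm hH'psd hcardpos
    rw [htr] at key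
    have hH're : H'.det.re = h * (s ^ n) ^ 2 := by
      rw [hdetH', hHre, hSre]
      push_cast
      simp [Complex.ofReal_re, ← Complex.ofReal_pow, ← Complex.ofReal_mul]
    rw [hH're, hcard] at key
    have hkre : (Complex.re (k : ℂ)) = (k : ℝ) := by simp
    rw [hkre] at key
    have hfrac : (k : ℝ) / (n * k : ℕ) = (n : ℝ)⁻¹ := by
      push_cast
      rw [div_eq_iff (by positivity)]
      field_simp
    rw [hfrac] at key
    -- (1/n)^(nk) ≤ (1/n)^n
    have hmono : ((n : ℝ)⁻¹) ^ (n * k) ≤ ((n : ℝ)⁻¹) ^ n := by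
      apply pow_le_pow_of_le_one (by positivity)
      · rw [inv_le_one_iff₀]; right; exact_mod_cast hn
      · exact Nat.le_mul_of_pos_right n hk
    have key2 : h * (t⁻¹) ^ n ≤ ((n : ℝ)⁻¹) ^ n := by
      calc h * (t⁻¹) ^ n = h * (s ^ 2) ^ n := by rw [hs2]
      _ = h * (s ^ n) ^ 2 := by ring
      _ ≤ ((n : ℝ)⁻¹) ^ (n * k) := key
      _ ≤ ((n : ℝ)⁻¹) ^ n := hmono
    have hfinal : h ≤ (t / n) ^ n := by
      have h3 := mul_le_mul_of_nonneg_right key2 (pow_nonneg ht.le n)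
      calc h = h * (t⁻¹) ^ n * t ^ n := by
            rw [mul_assoc, ← mul_pow, inv_mul_cancel₀ ht.ne', one_pow, mul_one]
      _ ≤ ((n : ℝ)⁻¹) ^ n * t ^ n := h3
      _ = (t / n) ^ n := by rw [← mul_pow]; ring_nf
    exact hfinal
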